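/- Let F be a field of characteristic ≠ 2. Set A1 = B1 = E12 + E23, A2 = [[0,1,0],[0,-1,0],[1,1,1]], B2 = [[0,1,0],[1,0,0],[1,0,0]]. Then (A1,A2) and (B1,B2) agree on tr(Xi), σ2(Xi), det(Xi) for i=1,2, tr(X1X2), tr(X1²X2), tr(X1X2²), and tr(X1²X2²X1X2), but tr(A1²A2²) ≠ tr(B1²B2²). -/

import Mathlib

/-- Sum of the principal 2×2 minors of a 3×3 matrix (second coefficient of the
characteristic polynomial). -/
def sigma2 {R : Type*} [CommRing R] (A : Matrix (Fin 3) (Fin 3) R) : R :=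
  (A 0 0 * A 1 1 - A 0 1 * A 1 0) + (A 0 0 * A 2 2 - A 0 2 * A 2 0) +
    (A 1 1 * A 2 2 - A 1 2 * A 2 1)

theorem stmt_4 (F : Type*) [Field F] (hchar : ringChar F ≠ 2)
    (A1 A2 B1 B2 : Matrix (Fin 3) (Fin 3) F)
    (hA1 : A1 = !![0, 1, 0; 0, 0, 1; 0, 0, 0])
    (hB1 : B1 = !![0, 1, 0; 0, 0, 1; 0, 0, 0])
    (hA2 : A2 = !![0, 1, 0; 0, -1, 0; 1, 1, 1])
    (hB2 : B2 = !![0, 1, 0; 1, 0, 0; 1, 0, 0]) :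
    A1.trace = B1.trace ∧ A2.trace = B2.trace ∧
    sigma2 A1 = sigma2 B1 ∧ sigma2 A2 = sigma2 B2 ∧
    A1.det = B1.det ∧ A2.det = B2.det ∧
    (A1 * A2).trace = (B1 * B2).trace ∧
    (A1 ^ 2 * A2).trace = (B1 ^ 2 * B2).trace ∧
    (A1 * A2 ^ 2).trace = (B1 * B2 ^ 2).trace ∧
    (A1 ^ 2 * A2 ^ 2 * A1 * A2).trace = (B1 ^ 2 * B2 ^ 2 * B1 * B2).trace ∧
    (A1 ^ 2 * A2 ^ 2).trace ≠ (B1 ^ 2 * B2 ^ 2).trace := by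
  subst hA1 hB1 hA2 hB2
  norm_num [sigma2, pow_two, Matrix.trace, Matrix.diag, Fin.sum_univ_three,
    Matrix.mul_apply, Matrix.det_fin_three, Matrix.vecHead, Matrix.vecTail,
    Matrix.cons_val_zero, Matrix.cons_val_one, Matrix.cons_val_two]
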